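/- Let n ≥ 5 and let M_d be the n×n symmetric matrix with diagonal entries 1, entries -d at positions (i,j) with i ≢ j±1 (mod n) and i ≠ j, and 0 at positions (i,j) with i ≡ j±1 (mod n), i ≠ j. Then for all sufficiently large d > 0, the number of positive eigenvalues of M_d equals 2⌊n/3⌋ and the number of negative eigenvalues equals n - 2⌊n/3⌋. -/

import Mathlib

open Matrix Polynomial Finset

set_option linter.unusedSectionVars false
set_option linter.unnecessarySimpa false
set_option linter.unusedVariables false



lemma my_charpoly_conj {R : Type*} [CommRing R] {m : Type*} [Fintype m] [DecidableEq m]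
    (W Winv A : Matrix m m R) (h1 : W * Winv = 1) (h2 : Winv * W = 1) :
    (W * A * Winv).charpoly = A.charpoly := by
  have hmap : ∀ B C : Matrix m m R, (B * C).map Polynomial.C = B.map Polynomial.C * C.map Polynomial.C :=
    fun B C => by simpa using (RingHom.mapMatrix (Polynomial.C (R := R))).map_mul B C
  have h1' : (W.map Polynomial.C) * (Winv.map Polynomial.C) = 1 := by
    rw [← hmap, h1]; simpa using (RingHom.mapMatrix (Polynomial.C (R := R))).map_one
  have key : charmatrix (W * A * Winv) =
      (W.map Polynomial.C) * charmatrix A * (Winv.map Polynomial.C) := by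
    unfold charmatrix
    rw [mul_sub, sub_mul]
    congr 1
    · rw [mul_assoc, (Matrix.scalar_commute (X : R[X]) (fun r => Commute.all _ r) _).eq, ← mul_assoc, h1', one_mul]
    · simp only [RingHom.mapMatrix_apply]
      rw [hmap, hmap]
  rw [Matrix.charpoly, key, det_mul, det_mul, Matrix.charpoly]
  rw [mul_right_comm, ← det_mul, h1']
  simp

lemma my_charpoly_diagonal {R : Type*} [CommRing R] {m : Type*} [Fintype m] [DecidableEq m]
    (v : m → R) : (diagonal v).charpoly = ∏ i, (X - Polynomial.C (v i)) := by
  rw [Matrix.charpoly]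
  unfold charmatrix
  rw [RingHom.mapMatrix_apply, Matrix.diagonal_map (by simp), Matrix.scalar_apply,
    Matrix.diagonal_sub, Matrix.det_diagonal]

noncomputable def rfun (n : ℕ) (d : ℝ) : ZMod n → ℝ := fun k =>
  (if k = 0 then -(d * n) else 0) + (1 + d) + 2 * d * Real.cos (2 * Real.pi * k.val / n)



noncomputable def zromega (n : ℕ) : ℂ := Complex.exp (2 * Real.pi * Complex.I / n)

noncomputable def zrzeta (n : ℕ) : ZMod n → ℂ := fun k => zromega n ^ k.val

variable {n : ℕ} [NeZero n]

lemma zromega_pow_n : zromega n ^ n = 1 := by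
  rw [zromega, ← Complex.exp_nat_mul]
  have hn : (n : ℂ) ≠ 0 := Nat.cast_ne_zero.mpr (NeZero.ne n)
  rw [show (n : ℂ) * (2 * Real.pi * Complex.I / n) = 2 * Real.pi * Complex.I by field_simp]
  exact Complex.exp_two_pi_mul_I

lemma zromega_pow_mod (x : ℕ) : zromega n ^ (x % n) = zromega n ^ x := by
  conv_rhs => rw [← Nat.div_add_mod x n]
  rw [pow_add, pow_mul, zromega_pow_n, one_pow, one_mul]

lemma zrzeta_add (a b : ZMod n) : zrzeta n (a + b) = zrzeta n a * zrzeta n b := by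
  rw [zrzeta, ZMod.val_add, zromega_pow_mod, pow_add]; rfl

lemma zrzeta_zero : zrzeta n 0 = 1 := by
  rw [zrzeta, ZMod.val_zero, pow_zero]

lemma zrzeta_nat (a : ZMod n) (m : ℕ) : zrzeta n (a * m) = zrzeta n a ^ m := by
  induction m with
  | zero => simpa using zrzeta_zero
  | succ m ih => rw [Nat.cast_succ, mul_add, zrzeta_add, ih, mul_one, pow_succ]

lemma zrzeta_pow_n (a : ZMod n) : zrzeta n a ^ n = 1 := by
  rw [zrzeta, ← pow_mul, mul_comm, pow_mul, zromega_pow_n, one_pow]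

lemma zrzeta_ne_one {a : ZMod n} (ha : a ≠ 0) : zrzeta n a ≠ 1 := by
  intro h
  have hn : (n : ℂ) ≠ 0 := Nat.cast_ne_zero.mpr (NeZero.ne n)
  rw [zrzeta, zromega, ← Complex.exp_nat_mul,
    show (a.val : ℂ) * (2 * Real.pi * Complex.I / n) =
      ((a.val : ℂ) / n) * (2 * Real.pi * Complex.I) by ring,
    Complex.exp_eq_one_iff] at h
  obtain ⟨k, hk⟩ := h
  have hval : 0 < a.val := Nat.pos_of_ne_zero (fun h0 => ha ((ZMod.val_eq_zero a).mp h0))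
  have hlt : a.val < n := ZMod.val_lt a
  have h2pi : (2 * (Real.pi : ℂ) * Complex.I) ≠ 0 := by
    simp [Real.pi_ne_zero, Complex.I_ne_zero]
  have h5 : (a.val : ℂ) = k * n := (div_eq_iff hn).mp (mul_right_cancel₀ h2pi hk)
  have key2 : (a.val : ℤ) = k * n := by exact_mod_cast h5
  have hdvd : (n : ℤ) ∣ (a.val : ℤ) := ⟨k, by rw [key2, mul_comm]⟩
  have := Int.le_of_dvd (by exact_mod_cast hval) hdvd
  omega

lemma zrzeta_sum (a : ZMod n) :
    ∑ j : ZMod n, zrzeta n (a * j) = if a = 0 then (n : ℂ) else 0 := by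
  split_ifs with h
  · subst h; simp [zrzeta_zero, ZMod.card]
  · have hsum : ∑ j : ZMod n, zrzeta n (a * j) = ∑ i ∈ Finset.range n, zrzeta n a ^ i := by
      refine Finset.sum_bij' (fun (j : ZMod n) _ => j.val) (fun (i : ℕ) _ => (i : ZMod n))
        (fun j _ => Finset.mem_range.mpr (ZMod.val_lt j))
        (fun i hi => Finset.mem_univ _)
        (fun j _ => ZMod.natCast_rightInverse j)
        (fun i hi => ZMod.val_cast_of_lt (Finset.mem_range.mp hi))
        (fun j _ => ?_)
      conv_lhs => rw [show a * j = a * (j.val : ZMod n) by rw [ZMod.natCast_rightInverse j]]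
      rw [zrzeta_nat]
    rw [hsum, geom_sum_eq (zrzeta_ne_one h), zrzeta_pow_n, sub_self, zero_div]

section aux
variable {n : ℕ} [NeZero n]

lemma zrzeta_add_neg (k : ZMod n) :
    zrzeta n (-k) + zrzeta n k = ((2 * Real.cos (2 * Real.pi * k.val / n) : ℝ) : ℂ) := by
  have h1 : zrzeta n k = Complex.exp (((2 * Real.pi * k.val / n : ℝ) : ℂ) * Complex.I) := by
    rw [zrzeta, zromega, ← Complex.exp_nat_mul]
    congr 1
    push_cast
    ring
  have h2 : zrzeta n (-k) = Complex.exp (-(((2 * Real.pi * k.val / n : ℝ) : ℂ) * Complex.I)) := by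
    have hmul : zrzeta n (-k) * zrzeta n k = 1 := by
      rw [← zrzeta_add, neg_add_cancel, zrzeta_zero]
    rw [Complex.exp_neg, ← h1]
    exact eq_inv_of_mul_eq_one_left hmul
  rw [h1, h2]
  have := Complex.two_cos (x := ((2 * Real.pi * k.val / n : ℝ) : ℂ))
  rw [neg_mul] at this
  rw [add_comm, ← this, ← Complex.ofReal_cos]
  push_cast
  ring


section main
variable {n : ℕ} [NeZero n]

noncomputable def Wmat (n : ℕ) : Matrix (ZMod n) (ZMod n) ℂ :=
  Matrix.of fun i j => zrzeta n (i * j)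

noncomputable def Wmat' (n : ℕ) : Matrix (ZMod n) (ZMod n) ℂ :=
  Matrix.of fun i j => zrzeta n (-(i * j))

lemma Wmat_mul_Wmat' : Wmat n * Wmat' n = (n : ℂ) • 1 := by
  ext i j
  rw [Matrix.mul_apply]
  have h : ∀ k : ZMod n, Wmat n i k * Wmat' n k j = zrzeta n ((i - j) * k) := by
    intro k
    rw [Wmat, Wmat', Matrix.of_apply, Matrix.of_apply, ← zrzeta_add]
    congr 1
    ring
  rw [Finset.sum_congr rfl fun k _ => h k, zrzeta_sum]
  by_cases hij : i = j <;> simp [hij, sub_eq_zero]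

lemma Wmat'_mul_Wmat : Wmat' n * Wmat n = (n : ℂ) • 1 := by
  ext i j
  rw [Matrix.mul_apply]
  have h : ∀ k : ZMod n, Wmat' n i k * Wmat n k j = zrzeta n ((j - i) * k) := by
    intro k
    rw [Wmat, Wmat', Matrix.of_apply, Matrix.of_apply, ← zrzeta_add]
    congr 1
    ring
  rw [Finset.sum_congr rfl fun k _ => h k, zrzeta_sum]
  by_cases hij : i = j
  · simp [hij, sub_eq_zero]
  · have hji : ¬(j = i) := fun h => hij h.symm
    simp [hij, sub_eq_zero, hji]

lemma charpoly_Mc (hn : 5 ≤ n) (d : ℝ) :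
    (Matrix.of fun i j : ZMod n =>
        if i = j then (1 : ℂ) else if i = j + 1 ∨ j = i + 1 then 0 else -(d : ℂ)).charpoly =
      ∏ k : ZMod n, (X - Polynomial.C ((rfun n d k : ℝ) : ℂ)) := by
  set Mc : Matrix (ZMod n) (ZMod n) ℂ := Matrix.of fun i j : ZMod n =>
      if i = j then (1 : ℂ) else if i = j + 1 ∨ j = i + 1 then 0 else -(d : ℂ) with hMc
  have hncC : (n : ℂ) ≠ 0 := Nat.cast_ne_zero.mpr (NeZero.ne n)
  set Winv : Matrix (ZMod n) (ZMod n) ℂ := (n : ℂ)⁻¹ • Wmat' n with hWinv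
  have h1 : Wmat n * Winv = 1 := by
    rw [hWinv, Matrix.mul_smul, Wmat_mul_Wmat', smul_smul, inv_mul_cancel₀ hncC, one_smul]
  have h2 : Winv * Wmat n = 1 := by
    rw [hWinv, Matrix.smul_mul, Wmat'_mul_Wmat, smul_smul, inv_mul_cancel₀ hncC, one_smul]
  -- facts about ZMod n for n ≥ 5
  have h01 : (0 : ZMod n) ≠ 1 := by
    intro h
    have h' : ((1 : ℕ) : ZMod n) = 0 := by exact_mod_cast h.symm
    rw [ZMod.natCast_eq_zero_iff] at h'
    have := Nat.le_of_dvd one_pos h'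
    omega
  have h0m1 : (0 : ZMod n) ≠ -1 := by
    intro h
    have h' : ((1 : ℕ) : ZMod n) = 0 := by
      push_cast
      linear_combination h
    rw [ZMod.natCast_eq_zero_iff] at h'
    have := Nat.le_of_dvd one_pos h'
    omega
  have HX : True := trivial
  have h1m1 : (1 : ZMod n) ≠ -1 := by
    intro h
    have h' : ((2 : ℕ) : ZMod n) = 0 := by
      push_cast
      linear_combination h
    rw [ZMod.natCast_eq_zero_iff] at h'
    have := Nat.le_of_dvd (by norm_num) h'
    omega
  have n10 : ¬((1 : ZMod n) = 0) := fun h => h01 h.symm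
  have nm10 : ¬((-1 : ZMod n) = 0) := fun h => h0m1 h.symm
  have nm11 : ¬((-1 : ZMod n) = 1) := fun h => h1m1 h.symm
  -- the diagonalization
  have MW_eq : Mc * Wmat n = Wmat n * Matrix.diagonal (fun k => ((rfun n d k : ℝ) : ℂ)) := by
    ext i k
    rw [Matrix.mul_apply, Matrix.mul_diagonal]
    have hreindex : ∑ j : ZMod n, Mc i j * Wmat n j k
        = ∑ m : ZMod n, Mc i (i - m) * Wmat n (i - m) k :=
      (Fintype.sum_equiv (Equiv.subLeft i) _ _ (fun m => rfl)).symm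
    rw [hreindex]
    have hentry : ∀ m : ZMod n, Mc i (i - m)
        = if m = 0 then (1 : ℂ) else if m = 1 ∨ m = -1 then 0 else -(d : ℂ) := by
      intro m
      rw [hMc, Matrix.of_apply]
      have e0 : (i = i - m) ↔ m = 0 := by
        constructor <;> intro h <;> linear_combination h
      have e1 : (i = i - m + 1) ↔ m = 1 := by
        constructor <;> intro h <;> linear_combination h
      have e2 : (i - m = i + 1) ↔ m = -1 := by
        constructor <;> intro h <;> linear_combination -h
      simp only [e0, e1, e2]
    have hW : ∀ m : ZMod n, Wmat n (i - m) k = zrzeta n (i * k) * zrzeta n (-k * m) := by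
      intro m
      rw [Wmat, Matrix.of_apply, ← zrzeta_add]
      congr 1
      ring
    rw [Finset.sum_congr rfl fun m _ => by rw [hentry m, hW m]]
    have hsplit : ∀ m : ZMod n,
        (if m = 0 then (1 : ℂ) else if m = 1 ∨ m = -1 then 0 else -(d : ℂ))
          * (zrzeta n (i * k) * zrzeta n (-k * m))
        = zrzeta n (i * k) * (-(d : ℂ) * zrzeta n (-k * m)
            + ((if m = 0 then ((1 : ℂ) + d) * zrzeta n (-k * m) else 0)
            + (if m = 1 then (d : ℂ) * zrzeta n (-k * m) else 0)
            + (if m = -1 then (d : ℂ) * zrzeta n (-k * m) else 0))) := by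
      intro m
      by_cases hm0 : m = 0
      · subst hm0
        simp only [if_pos rfl, if_neg h01, if_neg h0m1, if_true]
        ring
      · by_cases hm1 : m = 1
        · subst hm1
          simp only [if_neg n10, if_pos rfl, if_pos (Or.inl rfl), if_neg h1m1, if_true, true_or]
          ring
        · by_cases hm2 : m = -1
          · subst hm2
            simp only [if_neg nm10, if_neg nm11, if_pos rfl, if_pos (Or.inr rfl), if_true, or_true]
            ring
          · have : ¬(m = 1 ∨ m = -1) := by rintro (h | h); exact hm1 h; exact hm2 h
            simp only [if_neg hm0, if_neg hm1, if_neg hm2, if_neg this]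
            ring
    rw [Finset.sum_congr rfl fun m _ => hsplit m, ← Finset.mul_sum]
    have hS : ∑ m : ZMod n, (-(d : ℂ) * zrzeta n (-k * m)
            + ((if m = 0 then ((1 : ℂ) + d) * zrzeta n (-k * m) else 0)
            + (if m = 1 then (d : ℂ) * zrzeta n (-k * m) else 0)
            + (if m = -1 then (d : ℂ) * zrzeta n (-k * m) else 0)))
        = ((rfun n d k : ℝ) : ℂ) := by
      rw [Finset.sum_add_distrib, Finset.sum_add_distrib, Finset.sum_add_distrib,
        ← Finset.mul_sum, zrzeta_sum,
        Finset.sum_ite_eq' Finset.univ (0 : ZMod n) (fun m => ((1 : ℂ) + d) * zrzeta n (-k * m)),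
        Finset.sum_ite_eq' Finset.univ (1 : ZMod n) (fun m => (d : ℂ) * zrzeta n (-k * m)),
        Finset.sum_ite_eq' Finset.univ (-1 : ZMod n) (fun m => (d : ℂ) * zrzeta n (-k * m))]
      simp only [Finset.mem_univ, if_true, mul_zero, mul_one, zrzeta_zero, neg_eq_zero,
        mul_neg, neg_neg, neg_mul]
      have htrig := zrzeta_add_neg (n := n) k
      push_cast at htrig
      rw [rfun]
      push_cast [apply_ite (fun x : ℝ => (x : ℂ))]
      split_ifs with hk <;> linear_combination (d : ℂ) * htrig
    rw [hS]
    rfl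
  have Mc_eq : Mc = Wmat n * Matrix.diagonal (fun k => ((rfun n d k : ℝ) : ℂ)) * Winv := by
    calc Mc = Mc * (Wmat n * Winv) := by rw [h1, mul_one]
    _ = (Mc * Wmat n) * Winv := by rw [mul_assoc]
    _ = _ := by rw [MW_eq]
  rw [Mc_eq, my_charpoly_conj _ _ _ h1 h2, my_charpoly_diagonal]

end main

end aux

lemma eig_multiset {n : ℕ} [NeZero n] (hn : 5 ≤ n) (d : ℝ)
    {M : Matrix (ZMod n) (ZMod n) ℝ}
    (hMdef : M = Matrix.of fun i j =>
      if i = j then (1 : ℝ) else if i = j + 1 ∨ j = i + 1 then 0 else -d)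
    (hM : M.IsHermitian) :
    Finset.univ.val.map hM.eigenvalues = Finset.univ.val.map (rfun n d) := by
  have hU := (Matrix.mem_unitaryGroup_iff).mp (hM.eigenvectorUnitary).2
  have hU' := (Matrix.mem_unitaryGroup_iff').mp (hM.eigenvectorUnitary).2
  have hcomp : (RCLike.ofReal ∘ hM.eigenvalues : ZMod n → ℝ) = hM.eigenvalues := by
    funext i
    simp [RCLike.ofReal]
  have hchar : M.charpoly = ∏ i : ZMod n, (X - Polynomial.C (hM.eigenvalues i)) := by
    conv_lhs => rw [hM.spectral_theorem]
    rw [Unitary.conjStarAlgAut_apply, my_charpoly_conj _ _ _ hU hU', hcomp, my_charpoly_diagonal]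
  have hmapM : M.map (Complex.ofRealHom) = Matrix.of fun i j : ZMod n =>
      if i = j then (1 : ℂ) else if i = j + 1 ∨ j = i + 1 then 0 else -(d : ℂ) := by
    subst hMdef
    ext i j
    simp only [Matrix.map_apply, Matrix.of_apply, Complex.ofRealHom_eq_coe,
      apply_ite (fun x : ℝ => (x : ℂ))]
    push_cast
    rfl
  have hkey : ((Finset.univ.val.map (fun i => (hM.eigenvalues i : ℂ))).map (fun a => X - Polynomial.C a)).prod
      = ((Finset.univ.val.map (fun k => ((rfun n d k : ℝ) : ℂ))).map (fun a => X - Polynomial.C a)).prod := by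
    have h1 : (M.map Complex.ofRealHom).charpoly = M.charpoly.map Complex.ofRealHom :=
      Matrix.charpoly_map M Complex.ofRealHom
    rw [hmapM, charpoly_Mc hn d, hchar, Polynomial.map_prod] at h1
    simp only [Polynomial.map_sub, Polynomial.map_X, Polynomial.map_C] at h1
    rw [Finset.prod_eq_multiset_prod, Finset.prod_eq_multiset_prod] at h1
    rw [Multiset.map_map, Multiset.map_map]
    exact h1.symm
  have hroots := congrArg Polynomial.roots hkey
  rw [Polynomial.roots_multiset_prod_X_sub_C, Polynomial.roots_multiset_prod_X_sub_C] at hroots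
  have : (Finset.univ.val.map hM.eigenvalues).map (fun x : ℝ => (x : ℂ))
      = (Finset.univ.val.map (rfun n d)).map (fun x : ℝ => (x : ℂ)) := by
    rw [Multiset.map_map, Multiset.map_map]
    exact hroots
  exact Multiset.map_injective Complex.ofReal_injective this

lemma cos_critA {n m : ℕ} (hn : 5 ≤ n) (h1 : 1 ≤ m) (h2 : 2 * m ≤ n) :
    (0 ≤ 1 + 2 * Real.cos (2 * Real.pi * m / n)) ↔ 3 * m ≤ n := by
  have hnpos : (0 : ℝ) < n := by positivity
  have hπ := Real.pi_pos
  have hc23 : Real.cos (2 * Real.pi / 3) = -(1 / 2) := by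
    rw [show 2 * Real.pi / 3 = Real.pi - Real.pi / 3 by ring, Real.cos_pi_sub,
      Real.cos_pi_div_three]
  have hm2 : (2 : ℝ) * m ≤ n := by exact_mod_cast h2
  have hθmem : 2 * Real.pi * m / n ∈ Set.Icc 0 Real.pi := by
    constructor
    · positivity
    · rw [div_le_iff₀ hnpos]
      nlinarith [hπ, (by exact_mod_cast h1 : (1:ℝ) ≤ (m:ℝ))]
  have h23mem : 2 * Real.pi / 3 ∈ Set.Icc 0 Real.pi := by
    constructor
    · positivity
    · nlinarith
  have mono : ∀ a b : ℝ, a ∈ Set.Icc 0 Real.pi → b ∈ Set.Icc 0 Real.pi →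
      (Real.cos b ≤ Real.cos a ↔ a ≤ b) := by
    intro a b ha hb
    constructor
    · intro h
      by_contra hab
      push_neg at hab
      exact absurd (Real.strictAntiOn_cos hb ha hab) (not_lt.2 h)
    · intro h
      exact Real.strictAntiOn_cos.antitoneOn ha hb h
  have key : (0 ≤ 1 + 2 * Real.cos (2 * Real.pi * m / n))
      ↔ 2 * Real.pi * m / n ≤ 2 * Real.pi / 3 := by
    rw [← mono _ _ hθmem h23mem, hc23]
    constructor <;> intro h <;> linarith
  rw [key, div_le_div_iff₀ hnpos (by norm_num : (0:ℝ) < 3)]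
  constructor
  · intro h
    have : (3 : ℝ) * m ≤ n := by nlinarith
    exact_mod_cast this
  · intro h
    have : (3 : ℝ) * m ≤ n := by exact_mod_cast h
    nlinarith

lemma cos_crit {n m : ℕ} (hn : 5 ≤ n) (h1 : 1 ≤ m) (h2 : m < n) :
    (0 ≤ 1 + 2 * Real.cos (2 * Real.pi * m / n)) ↔ (3 * m ≤ n ∨ 2 * n ≤ 3 * m) := by
  rcases le_or_gt (2 * m) n with hc | hc
  · rw [cos_critA hn h1 hc]
    constructor
    · exact Or.inl
    · rintro (h | h)
      · exact h
      · omega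
  · have hm' : 1 ≤ n - m := by omega
    have hm'2 : 2 * (n - m) ≤ n := by omega
    have hcast : ((n - m : ℕ) : ℝ) = (n : ℝ) - m := by
      rw [Nat.cast_sub (le_of_lt h2)]
    have hnpos : (0 : ℝ) < n := by positivity
    have hcos : Real.cos (2 * Real.pi * m / n) = Real.cos (2 * Real.pi * (n - m : ℕ) / n) := by
      rw [hcast, show 2 * Real.pi * ((n:ℝ) - m) / n = 2 * Real.pi - 2 * Real.pi * m / n by
        field_simp, Real.cos_two_pi_sub]
    rw [hcos, cos_critA hn hm' hm'2]
    omega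

lemma count_nat {n : ℕ} (hn : 5 ≤ n) :
    ((Finset.range n).filter fun m => m ≠ 0 ∧ (3 * m ≤ n ∨ 2 * n ≤ 3 * m)).card = 2 * (n / 3) := by
  have hcongr : (Finset.range n).filter (fun m => m ≠ 0 ∧ (3 * m ≤ n ∨ 2 * n ≤ 3 * m))
      = (Finset.range n).filter (fun m => (1 ≤ m ∧ 3 * m ≤ n) ∨ 2 * n ≤ 3 * m) := by
    apply Finset.filter_congr
    intro m hm
    rw [Finset.mem_range] at hm
    constructor
    · rintro ⟨h0, h | h⟩
      · exact Or.inl ⟨by omega, h⟩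
      · exact Or.inr h
    · rintro (⟨h0, h⟩ | h)
      · exact ⟨by omega, Or.inl h⟩
      · exact ⟨by omega, Or.inr h⟩
  rw [hcongr, Finset.filter_or, Finset.card_union_of_disjoint]
  · have e1 : (Finset.range n).filter (fun m => 1 ≤ m ∧ 3 * m ≤ n) = Finset.Icc 1 (n / 3) := by
      ext m
      simp only [Finset.mem_filter, Finset.mem_range, Finset.mem_Icc]
      omega
    have e2 : (Finset.range n).filter (fun m => 2 * n ≤ 3 * m) = Finset.Icc (n - n / 3) (n - 1) := by
      ext m
      simp only [Finset.mem_filter, Finset.mem_range, Finset.mem_Icc]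
      omega
    rw [e1, e2, Nat.card_Icc, Nat.card_Icc]
    omega
  · rw [Finset.disjoint_left]
    intro m hm1 hm2
    rw [Finset.mem_filter] at hm1 hm2
    omega

lemma card_zmod_filter {n : ℕ} [NeZero n] (P : ℕ → Prop) [DecidablePred P] :
    (Finset.univ.filter fun k : ZMod n => P k.val).card = ((Finset.range n).filter P).card := by
  apply Finset.card_bij (fun k _ => k.val)
  · intro k hk
    rw [Finset.mem_filter] at hk ⊢
    exact ⟨Finset.mem_range.mpr (ZMod.val_lt k), hk.2⟩
  · intro a _ b _ h
    exact ZMod.val_injective n h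
  · intro m hm
    rw [Finset.mem_filter] at hm
    refine ⟨(m : ZMod n), ?_, ZMod.val_cast_of_lt (Finset.mem_range.mp hm.1)⟩
    rw [Finset.mem_filter]
    exact ⟨Finset.mem_univ _, by rw [ZMod.val_cast_of_lt (Finset.mem_range.mp hm.1)]; exact hm.2⟩

lemma rfun_count {n : ℕ} [NeZero n] (hn : 5 ≤ n) :
    ∃ d₀ : ℝ, ∀ d ≥ d₀, 0 < d →
      ((Finset.univ.filter fun k : ZMod n => 0 < rfun n d k).card = 2 * (n / 3) ∧
       (Finset.univ.filter fun k : ZMod n => rfun n d k < 0).card = n - 2 * (n / 3)) := by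
  set c : ZMod n → ℝ := fun k => 1 + 2 * Real.cos (2 * Real.pi * k.val / n) with hc
  refine ⟨1 + ∑ k : ZMod n, (if c k < 0 then (-(c k))⁻¹ else 0), fun d hd hd0 => ?_⟩
  have hterm_nonneg : ∀ k : ZMod n, 0 ≤ (if c k < 0 then (-(c k))⁻¹ else 0) := by
    intro k
    split_ifs with h
    · exact le_of_lt (inv_pos.2 (neg_pos.2 h))
    · exact le_refl _
  have hS_nonneg : 0 ≤ ∑ k : ZMod n, (if c k < 0 then (-(c k))⁻¹ else 0) :=
    Finset.sum_nonneg (fun k _ => hterm_nonneg k)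
  have hd1 : 1 ≤ d := by linarith
  have h5 : (5 : ℝ) ≤ n := by exact_mod_cast hn
  have hval0 : ((0 : ZMod n)).val = 0 := ZMod.val_zero
  have hr0 : rfun n d 0 < 0 := by
    simp only [rfun, if_pos rfl, hval0, Nat.cast_zero, mul_zero, zero_div, Real.cos_zero,
      if_true]
    nlinarith [mul_le_mul_of_nonneg_left h5 (le_of_lt hd0)]
  have hrk : ∀ k : ZMod n, k ≠ 0 → rfun n d k = 1 + d * c k := by
    intro k hk
    simp only [rfun, if_neg hk, hc]
    ring
  have hneg : ∀ k : ZMod n, k ≠ 0 → c k < 0 → rfun n d k < 0 := by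
    intro k hk hck
    have hterm : (-(c k))⁻¹ ≤ ∑ j : ZMod n, (if c j < 0 then (-(c j))⁻¹ else 0) := by
      have := Finset.single_le_sum (fun j (_ : j ∈ Finset.univ) => hterm_nonneg j)
        (Finset.mem_univ k)
      rwa [if_pos hck] at this
    have hlt : (-(c k))⁻¹ < d := by linarith
    have hmul : (-(c k)) * (-(c k))⁻¹ = 1 := mul_inv_cancel₀ (ne_of_gt (neg_pos.2 hck))
    rw [hrk k hk]
    have h1lt : 1 < -c k * d := by
      calc 1 = -c k * (-c k)⁻¹ := hmul.symm
      _ < -c k * d := mul_lt_mul_of_pos_left hlt (neg_pos.2 hck)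
    nlinarith [h1lt]
  have hpos : ∀ k : ZMod n, k ≠ 0 → 0 ≤ c k → 0 < rfun n d k := by
    intro k hk hck
    rw [hrk k hk]
    nlinarith
  have hpos_iff : ∀ k : ZMod n, 0 < rfun n d k ↔ (k ≠ 0 ∧ 0 ≤ c k) := by
    intro k
    constructor
    · intro h
      by_cases hk : k = 0
      · exact absurd h (by rw [hk]; linarith)
      · refine ⟨hk, ?_⟩
        by_contra hcc
        push_neg at hcc
        linarith [hneg k hk hcc]
    · rintro ⟨hk, hck⟩
      exact hpos k hk hck
  have hne : ∀ k : ZMod n, rfun n d k ≠ 0 := by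
    intro k
    by_cases hk : k = 0
    · rw [hk]; exact ne_of_lt hr0
    · rcases le_or_gt 0 (c k) with hck | hck
      · exact ne_of_gt (hpos k hk hck)
      · exact ne_of_lt (hneg k hk hck)
  have hneg_iff : ∀ k : ZMod n, rfun n d k < 0 ↔ ¬(0 < rfun n d k) := by
    intro k
    constructor
    · exact fun h => not_lt.2 (le_of_lt h)
    · intro h
      exact lt_of_le_of_ne (not_lt.1 h) (hne k)
  have hposcard : (Finset.univ.filter fun k : ZMod n => 0 < rfun n d k).card = 2 * (n / 3) := by
    have hfc : (Finset.univ.filter fun k : ZMod n => 0 < rfun n d k)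
        = Finset.univ.filter (fun k : ZMod n =>
            k.val ≠ 0 ∧ (3 * k.val ≤ n ∨ 2 * n ≤ 3 * k.val)) := by
      apply Finset.filter_congr
      intro k _
      rw [hpos_iff k]
      by_cases hk : k = 0
      · subst hk
        simp [hval0]
      · have hval_ne : k.val ≠ 0 := fun h => hk ((ZMod.val_eq_zero k).mp h)
        have h1k : 1 ≤ k.val := Nat.pos_of_ne_zero hval_ne
        have h2k : k.val < n := ZMod.val_lt k
        constructor
        · rintro ⟨-, hck⟩
          exact ⟨hval_ne, (cos_crit hn h1k h2k).mp hck⟩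
        · rintro ⟨-, hck⟩
          exact ⟨hk, (cos_crit hn h1k h2k).mpr hck⟩
    rw [hfc, card_zmod_filter (fun m => m ≠ 0 ∧ (3 * m ≤ n ∨ 2 * n ≤ 3 * m)), count_nat hn]
  refine ⟨hposcard, ?_⟩
  have hnegset : (Finset.univ.filter fun k : ZMod n => rfun n d k < 0)
      = Finset.univ \ (Finset.univ.filter fun k : ZMod n => 0 < rfun n d k) := by
    rw [← Finset.filter_not]
    apply Finset.filter_congr
    intro k _
    exact hneg_iff k
  rw [hnegset, Finset.card_sdiff_of_subset (Finset.filter_subset _ _), hposcard, Finset.card_univ,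
    ZMod.card]


theorem signature_of_cycle_complement_gram_matrix (n : ℕ) [NeZero n] (hn : 5 ≤ n) :
    let M : ℝ → Matrix (ZMod n) (ZMod n) ℝ := fun d =>
      Matrix.of fun i j =>
        if i = j then 1 else if i = j + 1 ∨ j = i + 1 then 0 else -d
    ∃ d₀ : ℝ, ∀ d ≥ d₀, 0 < d →
      ∀ hM : (M d).IsHermitian,
        (Finset.univ.filter fun k => 0 < hM.eigenvalues k).card = 2 * (n / 3) ∧
        (Finset.univ.filter fun k => hM.eigenvalues k < 0).card = n - 2 * (n / 3) := by
  intro M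
  obtain ⟨d₀, hd₀⟩ := rfun_count (n := n) hn
  refine ⟨d₀, fun d hd hdpos hM => ?_⟩
  have hms := eig_multiset hn d (rfl : M d = _) hM
  have hcount : ∀ (p : ℝ → Prop) (inst : DecidablePred p),
      (Finset.univ.filter fun k => p (hM.eigenvalues k)).card
        = (Finset.univ.filter fun k : ZMod n => p (rfun n d k)).card := by
    intro p inst
    have e : ∀ (f : ZMod n → ℝ), (Finset.univ.filter fun k => p (f k)).card
        = Multiset.countP p (Finset.univ.val.map f) := by
      intro f
      rw [Multiset.countP_map, Finset.card_def,
        Finset.filter_val]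
    rw [e hM.eigenvalues, e (rfun n d), hms]
  obtain ⟨h1, h2⟩ := hd₀ d hd hdpos
  exact ⟨(hcount (fun x => 0 < x) _).trans h1, (hcount (fun x => x < 0) _).trans h2⟩
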